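/- Let Δ be a d×d real symmetric Laplacian matrix (nonnegative off-diagonal entries, zero row sums) whose associated graph is connected, and fix ℓ ∈ {1,…,d}. Let β ∈ ℝ^d satisfy β_k > 0 for all k ≠ ℓ and β_ℓ = − Σ_{k≠ℓ} β_k. Then there exists a unique α ∈ ℝ^d such that Δα = −β and α_ℓ = 0; moreover this solution satisfies α_k > 0 for all k ≠ ℓ. -/
import Mathlib


open Matrix Finset

lemma helper1 {d : ℕ} (Δ : Matrix (Fin d) (Fin d) ℝ)
    (hrow : ∀ k, ∑ k', Δ k k' = 0) (γ : Fin d → ℝ) (k : Fin d) :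
    Δ.mulVec γ k = ∑ k', Δ k k' * (γ k' - γ k) := by
  simp only [mul_sub, Finset.sum_sub_distrib, ← Finset.sum_mul, hrow k, zero_mul, sub_zero]
  simp [Matrix.mulVec, dotProduct]

lemma helper2 {d : ℕ} (Δ : Matrix (Fin d) (Fin d) ℝ)
    (hoff : ∀ k k', k ≠ k' → 0 ≤ Δ k k')
    (hrow : ∀ k, ∑ k', Δ k k' = 0) (γ : Fin d → ℝ) (k : Fin d)
    (hmin : ∀ k', γ k ≤ γ k') : 0 ≤ Δ.mulVec γ k := by
  rw [helper1 Δ hrow]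
  apply Finset.sum_nonneg
  intro k' _
  rcases eq_or_ne k k' with rfl | h
  · simp
  · exact mul_nonneg (hoff k k' h) (sub_nonneg.2 (hmin k'))

/-- kernel vectors are constant -/
lemma helper3 {d : ℕ} (Δ : Matrix (Fin d) (Fin d) ℝ)
    (hsymm : Δ.IsSymm)
    (hoff : ∀ k k', k ≠ k' → 0 ≤ Δ k k')
    (hrow : ∀ k, ∑ k', Δ k k' = 0)
    (hconn : (SimpleGraph.fromRel (fun k k' => 0 < Δ k k')).Connected)
    (γ : Fin d → ℝ) (hγ : Δ.mulVec γ = 0) (a b : Fin d) : γ a = γ b := by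
  -- pick a global minimizer
  have hne : (Finset.univ : Finset (Fin d)).Nonempty := ⟨a, Finset.mem_univ a⟩
  obtain ⟨k₀, -, hk₀⟩ := Finset.exists_min_image Finset.univ γ hne
  have hmin : ∀ k', γ k₀ ≤ γ k' := fun k' => hk₀ k' (Finset.mem_univ k')
  -- every vertex has the min value
  have key : ∀ c : Fin d, γ c = γ k₀ := by
    intro c
    obtain ⟨w⟩ := (hconn k₀ c)
    -- induct along the walk, maintaining that current vertex has the min value
    have step : ∀ x y : Fin d,
        (SimpleGraph.fromRel (fun k k' => 0 < Δ k k')).Adj x y → γ x = γ k₀ → γ y = γ k₀ := by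
      intro x y hadj hx
      have hx' : ∀ k', γ x ≤ γ k' := fun k' => hx ▸ hmin k'
      have h0 : Δ.mulVec γ x = 0 := by rw [hγ]; rfl
      rw [helper1 Δ hrow] at h0
      have hterm : ∀ k' ∈ Finset.univ, (0:ℝ) ≤ Δ x k' * (γ k' - γ x) := by
        intro k' _
        rcases eq_or_ne x k' with rfl | h
        · simp
        · exact mul_nonneg (hoff x k' h) (sub_nonneg.2 (hx' k'))
      have hzero := (Finset.sum_eq_zero_iff_of_nonneg hterm).1 h0 y (Finset.mem_univ y)
      obtain ⟨hxy, hr⟩ := hadj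
      have hΔ : 0 < Δ x y := by
        rcases hr with h | h
        · exact h
        · have : Δ y x = Δ x y := congrFun (congrFun hsymm.symm y) x
          -- Δ.IsSymm : Δᵀ = Δ, so Δ x y = Δ y x
          rwa [Matrix.IsSymm.apply hsymm] at h
      have := mul_eq_zero.1 hzero
      rcases this with h | h
      · exact absurd h (ne_of_gt hΔ)
      · have : γ y = γ x := by linarith [sub_eq_zero.1 h]
        rw [this, hx]
    have walkprop : ∀ u v : Fin d,
        (SimpleGraph.fromRel (fun k k' => 0 < Δ k k')).Walk u v → γ u = γ k₀ → γ v = γ k₀ := by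
      intro u v w
      induction w with
      | nil => exact fun h => h
      | cons h p ih => exact fun hu => ih (step _ _ h hu)
    exact walkprop k₀ c w rfl
  rw [key a, key b]

/-- Let `Δ` be a `d × d` real symmetric Laplacian matrix (nonnegative
off-diagonal entries, zero row sums) with connected associated graph, fix `ℓ`, and let
`β ∈ ℝ^d` have `β_k > 0` for `k ≠ ℓ` and `β_ℓ = −Σ_{k≠ℓ} β_k`. Then there exists a unique
`α` with `Δα = −β` and `α_ℓ = 0`, and this solution satisfies `α_k > 0` for all `k ≠ ℓ`. -/
theorem stmt10 {d : ℕ} (Δ : Matrix (Fin d) (Fin d) ℝ)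
    (hsymm : Δ.IsSymm)
    (hoff : ∀ k k', k ≠ k' → 0 ≤ Δ k k')
    (hrow : ∀ k, ∑ k', Δ k k' = 0)
    (hconn : (SimpleGraph.fromRel (fun k k' => 0 < Δ k k')).Connected)
    (ℓ : Fin d) (β : Fin d → ℝ)
    (hβpos : ∀ k, k ≠ ℓ → 0 < β k)
    (hβℓ : β ℓ = -∑ k ∈ Finset.univ.erase ℓ, β k) :
    (∃! α : Fin d → ℝ, Δ.mulVec α = -β ∧ α ℓ = 0) ∧
      ∀ α : Fin d → ℝ, (Δ.mulVec α = -β ∧ α ℓ = 0) → ∀ k, k ≠ ℓ → 0 < α k := by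
  have hd : 0 < d := ℓ.pos
  -- constant vectors are killed
  have hconst : ∀ c : ℝ, Δ.mulVec (fun _ => c) = 0 := by
    intro c
    funext k
    simp [Matrix.mulVec, dotProduct, ← Finset.sum_mul, hrow k]
  -- positivity claim
  have hpos : ∀ α : Fin d → ℝ, (Δ.mulVec α = -β ∧ α ℓ = 0) → ∀ k, k ≠ ℓ → 0 < α k := by
    rintro α ⟨hα, hαℓ⟩ k hk
    by_contra hle
    push_neg at hle
    obtain ⟨k₀, -, hk₀⟩ := Finset.exists_min_image Finset.univ α ⟨k, Finset.mem_univ k⟩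
    have hmin : ∀ k', α k₀ ≤ α k' := fun k' => hk₀ k' (Finset.mem_univ k')
    -- find a minimizer distinct from ℓ
    have : ∃ m : Fin d, m ≠ ℓ ∧ ∀ k', α m ≤ α k' := by
      rcases eq_or_ne k₀ ℓ with rfl | h
      · refine ⟨k, hk, fun k' => ?_⟩
        have h1 : α k ≤ α k₀ := by rw [hαℓ] at hmin ⊢; linarith [hmin k]
        exact le_trans h1 (hmin k')
      · exact ⟨k₀, h, hmin⟩
    obtain ⟨m, hmℓ, hm⟩ := this
    have h1 : 0 ≤ Δ.mulVec α m := helper2 Δ hoff hrow α m hm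
    rw [hα] at h1
    have := hβpos m hmℓ
    simp only [Pi.neg_apply] at h1
    linarith
  -- kernel characterization: only uniqueness direction needed as "constant"
  -- linear maps
  set f := Δ.mulVecLin with hf
  have hker : ∀ γ : Fin d → ℝ, f γ = 0 → ∀ a b, γ a = γ b :=
    fun γ hγ => helper3 Δ hsymm hoff hrow hconn γ hγ
  -- kernel = span of constant 1
  have hkerspan : LinearMap.ker f = Submodule.span ℝ ({fun _ => (1:ℝ)} : Set (Fin d → ℝ)) := by
    apply le_antisymm
    · intro γ hγ
      rw [Submodule.mem_span_singleton]
      refine ⟨γ ℓ, ?_⟩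
      funext b
      simp [hker γ (LinearMap.mem_ker.1 hγ) b ℓ]
    · rw [Submodule.span_le, Set.singleton_subset_iff]
      exact LinearMap.mem_ker.2 (hconst 1)
  have hone : ((fun _ => (1:ℝ)) : Fin d → ℝ) ≠ 0 := by
    intro h
    have := congrFun h ℓ
    simp at this
  have hkerrank : Module.finrank ℝ (LinearMap.ker f) = 1 := by
    rw [hkerspan, finrank_span_singleton hone]
  -- sum functional
  let S : (Fin d → ℝ) →ₗ[ℝ] ℝ :=
    { toFun := fun x => ∑ k, x k
      map_add' := fun x y => by simp [Finset.sum_add_distrib]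
      map_smul' := fun c x => by simp [Finset.mul_sum] }
  have hSsurj : Function.Surjective S := by
    intro x
    exact ⟨fun _ => x / d, by
      simp only [S, LinearMap.coe_mk, AddHom.coe_mk, Finset.sum_const, Finset.card_univ,
        Fintype.card_fin, nsmul_eq_mul]
      field_simp⟩
  have hSker : Module.finrank ℝ (LinearMap.ker S) = d - 1 := by
    have h := LinearMap.finrank_range_add_finrank_ker S
    rw [LinearMap.range_eq_top.2 hSsurj] at h
    simp only [finrank_top, Module.finrank_self] at h
    have hdim : Module.finrank ℝ (Fin d → ℝ) = d := by simp
    omega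
  have hfrange : Module.finrank ℝ (LinearMap.range f) = d - 1 := by
    have h := LinearMap.finrank_range_add_finrank_ker f
    have hdim : Module.finrank ℝ (Fin d → ℝ) = d := by simp
    rw [hkerrank, hdim] at h
    omega
  -- range f ≤ ker S
  have hsub : LinearMap.range f ≤ LinearMap.ker S := by
    rintro - ⟨x, rfl⟩
    rw [LinearMap.mem_ker]
    show ∑ k, Δ.mulVec x k = 0
    have : ∀ k', ∑ k, Δ k k' = 0 := by
      intro k'
      have : ∀ k, Δ k k' = Δ k' k := fun k => (Matrix.IsSymm.apply hsymm k' k).symm ▸ rfl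
      calc ∑ k, Δ k k' = ∑ k, Δ k' k := by
            apply Finset.sum_congr rfl
            intro k _
            exact this k
        _ = 0 := hrow k'
    calc ∑ k, Δ.mulVec x k = ∑ k, ∑ k', Δ k k' * x k' := by
          apply Finset.sum_congr rfl; intro k _; rfl
      _ = ∑ k', (∑ k, Δ k k') * x k' := by
          rw [Finset.sum_comm]
          apply Finset.sum_congr rfl; intro k' _
          rw [Finset.sum_mul]
      _ = 0 := by simp [this]
  have hrange : LinearMap.range f = LinearMap.ker S := by
    apply Submodule.eq_of_le_of_finrank_le hsub
    rw [hfrange, hSker]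
  -- -β is in ker S
  have hβker : (-β) ∈ LinearMap.ker S := by
    rw [LinearMap.mem_ker]
    show ∑ k, (-β) k = 0
    have hsum : ∑ k, β k = 0 := by
      rw [← Finset.add_sum_erase Finset.univ β (Finset.mem_univ ℓ), hβℓ]
      ring
    simp [hsum]
  obtain ⟨α₀, hα₀⟩ := hrange ▸ hβker
  -- adjust to vanish at ℓ
  refine ⟨⟨fun k => α₀ k - α₀ ℓ, ⟨?_, by simp⟩, ?_⟩, hpos⟩
  · have : (fun k => α₀ k - α₀ ℓ) = α₀ - (fun _ => α₀ ℓ) := rfl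
    rw [this, Matrix.mulVec_sub, hconst, sub_zero]
    exact hα₀
  · rintro y ⟨hy1, hy2⟩
    have hdiff : f (y - fun k => α₀ k - α₀ ℓ) = 0 := by
      show Δ.mulVec _ = 0
      have h2 : Δ.mulVec (fun k => α₀ k - α₀ ℓ) = -β := by
        have : (fun k => α₀ k - α₀ ℓ) = α₀ - (fun _ => α₀ ℓ) := rfl
        rw [this, Matrix.mulVec_sub, hconst, sub_zero]
        exact hα₀
      rw [Matrix.mulVec_sub, hy1, h2, sub_self]
    funext k
    have := hker _ hdiff k ℓ
    simp only [Pi.sub_apply, hy2, sub_self, sub_zero] at this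
    linarith [this]
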